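/- For a down-set Δ ⊆ 2^[n] with ∅ ∈ Δ and Δ ≠ 2^[n], letting 𝓜 be the blockers of Δ and 𝓜* the blockers of the Alexander dual Δ*, one has ∑_{M* ∈ 𝓜*} 2^{−|M*|} + ∑_{M ∈ 𝓜} 2^{−|M|} ≥ 1. -/

import Mathlib

open Finset

/-- The Alexander dual of a family of subsets of `Fin n`. -/
def alexDual {n : ℕ} (Δ : Finset (Finset (Fin n))) : Finset (Finset (Fin n)) :=
  (Finset.univ.filter (fun σ => σ ∉ Δ)).image (fun σ => σᶜ)

lemma exists_blocker {n : ℕ} (Γ 𝓜 : Finset (Finset (Fin n)))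
    (h : ∀ M, M ∈ 𝓜 ↔ M ∉ Γ ∧ ∀ τ ⊂ M, τ ∈ Γ) :
    ∀ σ, σ ∉ Γ → ∃ M ∈ 𝓜, M ⊆ σ := by
  intro σ
  induction σ using Finset.strongInduction with
  | _ σ ih =>
    intro hσ
    by_cases hall : ∀ τ ⊂ σ, τ ∈ Γ
    · exact ⟨σ, (h σ).2 ⟨hσ, hall⟩, subset_rfl⟩
    · push_neg at hall
      obtain ⟨τ, hτσ, hτ⟩ := hall
      obtain ⟨M, hM, hMτ⟩ := ih τ hτσ hτ
      exact ⟨M, hM, hMτ.trans hτσ.subset⟩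

lemma card_supersets_le {n : ℕ} (M : Finset (Fin n)) :
    (univ.filter (fun σ => M ⊆ σ)).card ≤ 2 ^ (n - M.card) := by
  have h1 : (univ.filter (fun σ => M ⊆ σ)).card ≤ (Mᶜ.powerset).card := by
    apply Finset.card_le_card_of_injOn (fun σ => σ \ M)
    · intro σ hσ
      simp only [Finset.mem_coe, Finset.mem_powerset]
      intro x hx
      simp only [Finset.mem_sdiff] at hx
      simp [hx.2]
    · intro a ha b hb hab
      simp only [mem_coe, mem_filter] at ha hb
      have := congrArg (fun s => s ∪ M) hab
      simpa [Finset.sdiff_union_of_subset ha.2, Finset.sdiff_union_of_subset hb.2] using this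
  rw [Finset.card_powerset, Finset.card_compl, Fintype.card_fin] at h1
  exact h1

lemma sum_bound {n : ℕ} (Γ 𝓜 : Finset (Finset (Fin n)))
    (h : ∀ M, M ∈ 𝓜 ↔ M ∉ Γ ∧ ∀ τ ⊂ M, τ ∈ Γ) :
    ((univ.filter (fun σ => σ ∉ Γ)).card : ℝ) / 2 ^ n ≤ ∑ M ∈ 𝓜, (1/2:ℝ) ^ M.card := by
  have hsub : univ.filter (fun σ => σ ∉ Γ) ⊆
      𝓜.biUnion (fun M => univ.filter (fun σ => M ⊆ σ)) := by
    intro σ hσ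
    simp only [mem_filter, mem_univ, true_and] at hσ
    obtain ⟨M, hM, hMσ⟩ := exists_blocker Γ 𝓜 h σ hσ
    simp only [mem_biUnion]
    exact ⟨M, hM, by simp [hMσ]⟩
  have hc : (univ.filter (fun σ => σ ∉ Γ)).card ≤
      ∑ M ∈ 𝓜, (univ.filter (fun σ => M ⊆ σ)).card :=
    le_trans (Finset.card_le_card hsub) (Finset.card_biUnion_le)
  have h2 : ∀ M : Finset (Fin n),
      ((univ.filter (fun σ => M ⊆ σ)).card : ℝ) / 2 ^ n ≤ (1/2:ℝ) ^ M.card := by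
    intro M
    rw [div_le_iff₀ (by positivity)]
    have hMn : M.card ≤ n := by simpa using Finset.card_le_card (Finset.subset_univ M)
    have key : (1/2:ℝ) ^ M.card * 2 ^ n = 2 ^ (n - M.card) := by
      rw [div_pow, one_pow, div_mul_eq_mul_div, one_mul,
        div_eq_iff (by positivity : (2:ℝ)^M.card ≠ 0), ← pow_add, Nat.sub_add_cancel hMn]
    rw [key]
    exact_mod_cast card_supersets_le M
  calc ((univ.filter (fun σ => σ ∉ Γ)).card : ℝ) / 2 ^ n
      ≤ (∑ M ∈ 𝓜, ((univ.filter (fun σ => M ⊆ σ)).card : ℝ)) / 2 ^ n := by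
        gcongr
        exact_mod_cast hc
    _ ≤ ∑ M ∈ 𝓜, (1/2:ℝ) ^ M.card := by
        rw [Finset.sum_div]
        exact Finset.sum_le_sum fun M _ => h2 M

theorem stmt_13 (n : ℕ) (Δ : Finset (Finset (Fin n)))
    (hΔ : ∀ σ ∈ Δ, ∀ τ ⊆ σ, τ ∈ Δ)
    (h0 : ∅ ∈ Δ) (hne : Δ ≠ Finset.univ)
    (𝓜 : Finset (Finset (Fin n)))
    (h𝓜 : ∀ M, M ∈ 𝓜 ↔ M ∉ Δ ∧ ∀ τ ⊂ M, τ ∈ Δ)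
    (𝓜' : Finset (Finset (Fin n)))
    (h𝓜' : ∀ M, M ∈ 𝓜' ↔ M ∉ alexDual Δ ∧ ∀ τ ⊂ M, τ ∈ alexDual Δ) :
    (1 : ℝ) ≤ (∑ M ∈ 𝓜', (1 / 2 : ℝ) ^ M.card) +
      ∑ M ∈ 𝓜, (1 / 2 : ℝ) ^ M.card := by
  have hmem : ∀ σ : Finset (Fin n), σ ∈ alexDual Δ ↔ σᶜ ∉ Δ := by
    intro σ
    simp only [alexDual, mem_image, mem_filter, mem_univ, true_and]
    constructor
    · rintro ⟨τ, hτ, rfl⟩; simpa using hτ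
    · intro hσ; exact ⟨σᶜ, hσ, by simp⟩
  -- counts
  have hcΔ : (univ.filter (fun σ => σ ∉ Δ)).card = 2 ^ n - Δ.card := by
    have : univ.filter (fun σ => σ ∉ Δ) = Δᶜ := by ext σ; simp
    rw [this, Finset.card_compl]
    simp [Finset.card_univ]
  have hcΔ' : (univ.filter (fun σ => σ ∉ alexDual Δ)).card = Δ.card := by
    have he : univ.filter (fun σ => σ ∉ alexDual Δ) = Δ.image (fun σ => σᶜ) := by
      ext σ
      simp only [mem_filter, mem_univ, true_and, hmem, mem_image, not_not]
      constructor
      · intro h; exact ⟨σᶜ, h, by simp⟩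
      · rintro ⟨τ, hτ, rfl⟩; simpa using hτ
    rw [he, Finset.card_image_of_injective _ (fun a b h => by simpa using congrArg compl h)]
  have hΔle : Δ.card ≤ 2 ^ n := by
    simpa [Finset.card_univ] using Finset.card_le_card (Finset.subset_univ Δ)
  have b1 := sum_bound (alexDual Δ) 𝓜' h𝓜'
  have b2 := sum_bound Δ 𝓜 h𝓜
  rw [hcΔ'] at b1
  rw [hcΔ] at b2
  have : (Δ.card : ℝ) / 2 ^ n + ((2 ^ n - Δ.card : ℕ) : ℝ) / 2 ^ n ≤ _ := add_le_add b1 b2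
  refine le_trans ?_ this
  rw [← add_div, Nat.cast_sub hΔle]
  rw [le_div_iff₀ (by positivity)]
  push_cast
  ring_nf
  norm_num
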